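/- Existence of combinatorial designs: for every natural number t ≥ 2 and every ℓ, there exist a universe size μ = O(ℓ² / log t) (concretely μ ≤ 10·ℓ²/⌈log₂ t⌉ suffices when ℓ ≥ ⌈log₂ t⌉) and sets D₁,…,D_t ⊆ {1,…,μ} such that |Dᵢ| = ℓ for all i and |Dᵢ ∩ Dⱼ| ≤ ⌈log₂ t⌉ for all i ≠ j. -/

import Mathlib

open Finset

-- (d) step: (s+1)^s ≤ 3*s^s
lemma pow_succ_le_three_mul (s : ℕ) : (s + 1) ^ s ≤ 3 * s ^ s := by
  rcases Nat.eq_zero_or_pos s with rfl | hs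
  · norm_num
  have hsR : (0:ℝ) < s := by exact_mod_cast hs
  have key : ((s:ℝ) + 1) ^ s ≤ 3 * (s:ℝ) ^ s := by
    have h1 : (s:ℝ) + 1 = s * (1 + 1/s) := by field_simp
    have h2 : (1 + 1/(s:ℝ)) ^ s ≤ 3 := by
      have := Real.add_one_le_exp (1/(s:ℝ))
      calc (1 + 1/(s:ℝ)) ^ s ≤ Real.exp (1/s) ^ s := by
            apply pow_le_pow_left₀ (by positivity) (by linarith)
        _ = Real.exp (s * (1/s)) := by rw [← Real.exp_nat_mul]
        _ = Real.exp 1 := by rw [mul_one_div, div_self hsR.ne']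
        _ ≤ 3 := (Real.exp_one_lt_d9.le.trans (by norm_num))
    calc ((s:ℝ) + 1) ^ s = (s:ℝ)^s * (1 + 1/s)^s := by rw [h1, mul_pow]
      _ ≤ (s:ℝ)^s * 3 := by
          apply mul_le_mul_of_nonneg_left h2 (by positivity)
      _ = 3 * (s:ℝ)^s := by ring
  exact_mod_cast key

lemma pow_self_le (s : ℕ) : s ^ s ≤ 3 ^ s * s.factorial := by
  induction s with
  | zero => simp
  | succ s ih =>
    calc (s+1)^(s+1) = (s+1) * (s+1)^s := by ring
      _ ≤ (s+1) * (3 * s^s) := Nat.mul_le_mul_left _ (pow_succ_le_three_mul s)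
      _ ≤ (s+1) * (3 * (3^s * s.factorial)) := by
          apply Nat.mul_le_mul_left; apply Nat.mul_le_mul_left; exact ih
      _ = 3^(s+1) * (s+1).factorial := by rw [Nat.factorial_succ]; ring

-- (b) lemma A
lemma pow_mul_descFactorial_le (k ℓ s : ℕ) (hk : 1 ≤ k) (hs : s ≤ ℓ) :
    k ^ s * ℓ.descFactorial s ≤ (k * ℓ).descFactorial s := by
  induction s with
  | zero => simp
  | succ s ih =>
    have hsℓ : s ≤ ℓ := Nat.le_of_succ_le hs
    rw [Nat.descFactorial_succ, Nat.descFactorial_succ]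
    calc k^(s+1) * ((ℓ - s) * ℓ.descFactorial s)
        = (k * (ℓ - s)) * (k^s * ℓ.descFactorial s) := by ring
      _ ≤ (k * ℓ - s) * ((k*ℓ).descFactorial s) := by
          apply Nat.mul_le_mul _ (ih hsℓ)
          rw [Nat.mul_sub]
          exact Nat.sub_le_sub_left (Nat.le_mul_of_pos_left s hk) _

lemma pow_mul_choose_le (k ℓ s : ℕ) (hk : 1 ≤ k) (hs : s ≤ ℓ) :
    k ^ s * ℓ.choose s ≤ (k * ℓ).choose s := by
  rw [Nat.choose_eq_descFactorial_div_factorial, Nat.choose_eq_descFactorial_div_factorial]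
  rw [← Nat.mul_div_assoc _ (Nat.factorial_dvd_descFactorial _ _)]
  exact Nat.div_le_div_right (pow_mul_descFactorial_le k ℓ s hk hs)

lemma factorial_mul_choose_le (ℓ s : ℕ) : s.factorial * ℓ.choose s ≤ ℓ ^ s := by
  rcases le_or_gt s ℓ with h | h
  · calc s.factorial * ℓ.choose s = ℓ.choose s * s.factorial := Nat.mul_comm _ _
      _ = ℓ.descFactorial s := by
        rw [Nat.choose_eq_descFactorial_div_factorial,
          Nat.div_mul_cancel (Nat.factorial_dvd_descFactorial _ _)]
      _ ≤ ℓ ^ s := Nat.descFactorial_le_pow _ _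
  · simp [Nat.choose_eq_zero_of_lt h]

-- key numeric inequality
lemma key_ineq (t ℓ Δ k : ℕ) (hΔ : 1 ≤ Δ) (hℓ : Δ < ℓ) (ht : t ≤ 2 ^ Δ)
    (hk : 9 * ℓ + 1 ≤ k * Δ) :
    t * (ℓ.choose (Δ+1) * ((k * ℓ - (Δ+1)).choose (ℓ - (Δ+1)))) < (k * ℓ).choose ℓ := by
  set s := Δ + 1 with hsdef
  have hsℓ : s ≤ ℓ := hℓ
  have hk1 : 1 ≤ k := by nlinarith
  have hμℓ : ℓ ≤ k * ℓ := Nat.le_mul_of_pos_left ℓ hk1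
  have hpos1 : 0 < ℓ.choose s := Nat.choose_pos hsℓ
  have hpos2 : 0 < (k * ℓ - s).choose (ℓ - s) := Nat.choose_pos (Nat.sub_le_sub_right hμℓ s)
  have hℓ1 : 1 ≤ ℓ := hΔ.trans hℓ.le
  have step1 : t * ℓ.choose s < k ^ s := by
    apply lt_of_mul_lt_mul_right (a := 3 ^ s * s.factorial) ?_ (Nat.zero_le _)
    calc t * ℓ.choose s * (3 ^ s * s.factorial)
        = t * 3 ^ s * (s.factorial * ℓ.choose s) := by ring
      _ ≤ 2 ^ Δ * 3 ^ s * ℓ ^ s :=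
          Nat.mul_le_mul (Nat.mul_le_mul_right _ ht) (factorial_mul_choose_le ℓ s)
      _ = 2 ^ Δ * (3 * ℓ) ^ s := by rw [mul_pow]; ring
      _ < 2 ^ s * (3 * ℓ) ^ s := by
          have h1 : (0:ℕ) < (3 * ℓ) ^ s := by positivity
          have h2 : 2 ^ Δ < 2 ^ s := Nat.pow_lt_pow_right (by norm_num) (Nat.lt_succ_self Δ)
          exact mul_lt_mul_of_pos_right h2 h1
      _ = (6 * ℓ) ^ s := by rw [← mul_pow]; ring_nf
      _ ≤ (k * s) ^ s := by
          apply Nat.pow_le_pow_left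
          calc 6 * ℓ ≤ 9 * ℓ + 1 := by omega
            _ ≤ k * Δ := hk
            _ ≤ k * s := Nat.mul_le_mul_left _ (by omega)
      _ = k ^ s * s ^ s := by rw [mul_pow]
      _ ≤ k ^ s * (3 ^ s * s.factorial) := Nat.mul_le_mul_left _ (pow_self_le s)
  apply lt_of_mul_lt_mul_right (a := ℓ.choose s) ?_ (Nat.zero_le _)
  calc t * (ℓ.choose s * ((k * ℓ - s).choose (ℓ - s))) * ℓ.choose s
      = (t * ℓ.choose s) * ℓ.choose s * (k * ℓ - s).choose (ℓ - s) := by ring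
    _ < k ^ s * ℓ.choose s * (k * ℓ - s).choose (ℓ - s) := by
        exact mul_lt_mul_of_pos_right (mul_lt_mul_of_pos_right step1 hpos1) hpos2
    _ ≤ (k * ℓ).choose s * (k * ℓ - s).choose (ℓ - s) :=
        Nat.mul_le_mul_right _ (pow_mul_choose_le k ℓ s hk1 hsℓ)
    _ = (k * ℓ).choose ℓ * ℓ.choose s := (Nat.choose_mul (n := k * ℓ) hsℓ).symm

lemma card_supersets {μ : ℕ} (T : Finset (Fin μ)) (ℓ : ℕ) (hT : T.card ≤ ℓ) :
    ((univ.powersetCard ℓ).filter (fun S => T ⊆ S)).card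
      = (μ - T.card).choose (ℓ - T.card) := by
  have : ((univ.powersetCard ℓ).filter (fun S => T ⊆ S)).card
      = ((univ \ T).powersetCard (ℓ - T.card)).card := by
    apply Finset.card_bij' (fun S _ => S \ T) (fun U _ => U ∪ T)
    · intro S hS
      simp only [mem_filter, mem_powersetCard_univ] at hS
      rw [mem_powersetCard]
      exact ⟨sdiff_subset_sdiff (subset_univ _) le_rfl,
        by rw [card_sdiff_of_subset hS.2, hS.1]⟩
    · intro U hU
      rw [mem_powersetCard] at hU
      have hdisj : Disjoint U T := disjoint_of_subset_left hU.1 (sdiff_disjoint)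
      simp only [mem_filter, mem_powersetCard_univ]
      refine ⟨?_, subset_union_right⟩
      rw [card_union_of_disjoint hdisj, hU.2]
      omega
    · intro S hS
      simp only [mem_filter] at hS
      exact sdiff_union_of_subset hS.2
    · intro U hU
      rw [mem_powersetCard] at hU
      exact union_sdiff_cancel_right (disjoint_of_subset_left hU.1 (sdiff_disjoint))
  rw [this, card_powersetCard, card_sdiff_of_subset (subset_univ _), card_univ, Fintype.card_fin]

lemma card_bad {μ ℓ s : ℕ} (D : Finset (Fin μ)) (hD : D.card = ℓ) :
    ((univ.powersetCard ℓ).filter (fun S => s ≤ (S ∩ D).card)).card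
      ≤ ℓ.choose s * (μ - s).choose (ℓ - s) := by
  rcases le_or_gt s ℓ with hs | hs
  · have hsub : (univ.powersetCard ℓ).filter (fun S => s ≤ (S ∩ D).card) ⊆
        (D.powersetCard s).biUnion
          (fun T => (univ.powersetCard ℓ).filter (fun S => T ⊆ S)) := by
      intro S hS
      simp only [mem_filter] at hS
      obtain ⟨T, hT1, hT2⟩ := exists_subset_card_eq hS.2
      refine mem_biUnion.2 ⟨T, ?_, ?_⟩
      · exact mem_powersetCard.2 ⟨hT1.trans inter_subset_right, hT2⟩
      · exact mem_filter.2 ⟨hS.1, hT1.trans inter_subset_left⟩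
    calc ((univ.powersetCard ℓ).filter (fun S => s ≤ (S ∩ D).card)).card
        ≤ ((D.powersetCard s).biUnion
            (fun T => (univ.powersetCard ℓ).filter (fun S => T ⊆ S))).card :=
          card_le_card hsub
      _ ≤ ∑ T ∈ D.powersetCard s,
            ((univ.powersetCard ℓ).filter (fun S => T ⊆ S)).card := card_biUnion_le
      _ = ∑ T ∈ D.powersetCard s, (μ - s).choose (ℓ - s) := by
          apply sum_congr rfl
          intro T hT
          rw [mem_powersetCard] at hT
          rw [card_supersets T ℓ (hT.2.le.trans (by omega)), hT.2]
      _ = ℓ.choose s * (μ - s).choose (ℓ - s) := by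
          rw [sum_const, card_powersetCard, hD, smul_eq_mul]
  · have : (univ.powersetCard ℓ).filter (fun S => s ≤ (S ∩ D).card) = ∅ := by
      apply filter_eq_empty_iff.2
      intro S _
      have : (S ∩ D).card ≤ ℓ := hD ▸ card_le_card inter_subset_right
      omega
    rw [this]
    simp

lemma greedy {μ ℓ s t : ℕ} (hμ : ℓ ≤ μ)
    (hineq : t * (ℓ.choose s * ((μ - s).choose (ℓ - s))) < μ.choose ℓ) :
    ∀ n, n ≤ t → ∃ D : Fin n → Finset (Fin μ),
      (∀ i, (D i).card = ℓ) ∧ ∀ i j : Fin n, i < j → ((D i) ∩ (D j)).card < s := by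
  intro n hn
  induction n with
  | zero => exact ⟨fun i => i.elim0, fun i => i.elim0, fun i => i.elim0⟩
  | succ n ih =>
    obtain ⟨D, hcard, hint⟩ := ih (Nat.le_of_succ_le hn)
    set P : Finset (Finset (Fin μ)) := univ.powersetCard ℓ with hP
    set bad : Finset (Finset (Fin μ)) := Finset.univ.biUnion (fun i : Fin n =>
       P.filter (fun S => s ≤ (S ∩ D i).card)) with hbad
    have hPcard : P.card = μ.choose ℓ := by
      rw [hP, card_powersetCard, card_univ, Fintype.card_fin]
    have hbadcard : bad.card < P.card := by
      calc bad.card ≤ ∑ i : Fin n, (P.filter (fun S => s ≤ (S ∩ D i).card)).card :=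
            card_biUnion_le
        _ ≤ ∑ _i : Fin n, ℓ.choose s * (μ - s).choose (ℓ - s) :=
            sum_le_sum (fun i _ => card_bad (D i) (hcard i))
        _ = n * (ℓ.choose s * (μ - s).choose (ℓ - s)) := by
            rw [sum_const, card_univ, Fintype.card_fin, smul_eq_mul]
        _ ≤ t * (ℓ.choose s * (μ - s).choose (ℓ - s)) :=
            Nat.mul_le_mul_right _ (by omega)
        _ < μ.choose ℓ := hineq
        _ = P.card := hPcard.symm
    have hns : ¬ (P ⊆ bad) := fun h => absurd (card_le_card h) (by omega)
    obtain ⟨S, hS, hSb⟩ := not_subset.1 hns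
    have hScard : S.card = ℓ := (mem_powersetCard.1 hS).2
    have hSgood : ∀ i : Fin n, (S ∩ D i).card < s := by
      intro i
      by_contra h
      push_neg at h
      exact hSb (mem_biUnion.2 ⟨i, mem_univ _, mem_filter.2 ⟨hS, h⟩⟩)
    refine ⟨Fin.snoc D S, ?_, ?_⟩
    · intro i
      refine Fin.lastCases ?_ (fun i' => ?_) i
      · simp [Fin.snoc_last, hScard]
      · simp [Fin.snoc_castSucc, hcard]
    · intro i j
      refine Fin.lastCases ?_ (fun j' => ?_) j
      · intro hij
        obtain ⟨i', rfl⟩ := Fin.eq_castSucc_of_ne_last (Fin.ne_last_of_lt hij)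
        rw [Fin.snoc_castSucc, Fin.snoc_last, inter_comm]
        exact hSgood i'
      · intro hij
        obtain ⟨i', rfl⟩ := Fin.eq_castSucc_of_ne_last
          (Fin.ne_last_of_lt (hij.trans (Fin.castSucc_lt_last j')))
        rw [Fin.snoc_castSucc, Fin.snoc_castSucc]
        exact hint i' j' (Fin.castSucc_lt_castSucc_iff.1 hij)

/-- Existence of combinatorial designs: for `t ≥ 2` and `ℓ ≥ ⌈log₂ t⌉` there is a
family of `t` subsets of a universe of size `μ ≤ 10·ℓ²/⌈log₂ t⌉`, each of size `ℓ`,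
with pairwise intersections of size at most `⌈log₂ t⌉`. -/
theorem design_exists (t ℓ : ℕ) (ht : 2 ≤ t) (hℓ : Nat.clog 2 t ≤ ℓ) :
    ∃ (μ : ℕ) (D : Fin t → Finset (Fin μ)),
      μ ≤ 10 * ℓ ^ 2 / Nat.clog 2 t ∧
      (∀ i, (D i).card = ℓ) ∧
      (∀ i j, i ≠ j → ((D i) ∩ (D j)).card ≤ Nat.clog 2 t) := by
  set Δ := Nat.clog 2 t with hΔdef
  have hΔ : 0 < Δ := Nat.clog_pos one_lt_two ht
  rcases le_or_gt ℓ Δ with hcase | hcase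
  · -- trivial case : ℓ ≤ Δ, take all sets to be the full universe Fin ℓ
    refine ⟨ℓ, fun _ => univ, ?_, ?_, ?_⟩
    · rw [Nat.le_div_iff_mul_le hΔ]
      nlinarith
    · intro i; rw [card_univ, Fintype.card_fin]
    · intro i j _
      calc (univ ∩ univ : Finset (Fin ℓ)).card ≤ (univ : Finset (Fin ℓ)).card :=
            card_le_card inter_subset_left
        _ = ℓ := by rw [card_univ, Fintype.card_fin]
        _ ≤ Δ := hcase
  · -- main case : Δ < ℓ
    set k := 9 * ℓ / Δ + 1 with hkdef
    have hdm := Nat.div_add_mod (9 * ℓ) Δ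
    have hmlt := Nat.mod_lt (9 * ℓ) hΔ
    have hkΔ : k * Δ = Δ * (9 * ℓ / Δ) + Δ := by ring
    have ht2 : t ≤ 2 ^ Δ := Nat.le_pow_clog one_lt_two t
    have hml : Δ * (9 * ℓ / Δ) ≤ 9 * ℓ := Nat.mul_div_le (9 * ℓ) Δ
    clear hΔdef hkdef
    clear_value k Δ
    have hk : 9 * ℓ + 1 ≤ k * Δ := by
      rw [hkΔ]; linarith
    have hkub : k * Δ ≤ 10 * ℓ := by
      rw [hkΔ]; linarith
    have hk1 : 1 ≤ k := by
      nlinarith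
    have hμℓ : ℓ ≤ k * ℓ := Nat.le_mul_of_pos_left ℓ hk1
    have key := key_ineq t ℓ Δ k hΔ hcase ht2 hk
    obtain ⟨D, h1, h2⟩ := greedy hμℓ key t le_rfl
    refine ⟨k * ℓ, D, ?_, h1, ?_⟩
    · rw [Nat.le_div_iff_mul_le hΔ]
      calc k * ℓ * Δ = ℓ * (k * Δ) := by ring
        _ ≤ ℓ * (10 * ℓ) := Nat.mul_le_mul_left _ hkub
        _ = 10 * ℓ ^ 2 := by ring
    · intro i j hij
      rcases lt_trichotomy i j with h | h | h
      · have := h2 i j h; omega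
      · exact absurd h hij
      · have := h2 j i h; rw [inter_comm]; omega
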